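/- Let K be a division ring with endomorphism S and S-derivation D, and let x₁, x₂ ∈ K with x₁ ≠ x₂. Then (t − x₁^{x₁−x₂})(t − x₂) = (t − x₂^{x₂−x₁})(t − x₁) in K[t;S,D], and this polynomial is the least left common multiple of t − x₁ and t − x₂. -/

import Mathlib

/-- The `(S,D)`-conjugate `a^c := S(c)·a·c⁻¹ + D(c)·c⁻¹`. -/
def sdConj {K : Type*} [DivisionRing K] (S : K →+* K) (D : K →+ K) (a c : K) : K :=
  S c * a * c⁻¹ + D c * c⁻¹

/-- `R` together with `ι : K →+* R` and `t : R` is the skew polynomial ring `K[t;S,D]`: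
the commutation rule `t·a = S(a)t + D(a)` holds and every element of `R` is uniquely a
polynomial `Σ ι(cᵢ)·tⁱ`. -/
def IsSkewPolyRing {K R : Type*} [DivisionRing K] [Ring R] (S : K →+* K) (D : K →+ K)
    (ι : K →+* R) (t : R) : Prop :=
  (∀ a : K, t * ι a = ι (S a) * t + ι (D a)) ∧
  (∀ r : R, ∃! c : ℕ →₀ K, r = c.sum fun i k => ι k * t ^ i)

/-- The coefficients of `r ∈ K[t;S,D]`. -/
noncomputable def coeffs {K R : Type*} [DivisionRing K] [Ring R] {S : K →+* K} {D : K →+ K}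
    {ι : K →+* R} {t : R} (h : IsSkewPolyRing S D ι t) (r : R) : ℕ →₀ K :=
  (h.2 r).choose

/-- The degree of `r ∈ K[t;S,D]` (with `deg 0 = 0`). -/
noncomputable def sdeg {K R : Type*} [DivisionRing K] [Ring R] {S : K →+* K} {D : K →+ K}
    {ι : K →+* R} {t : R} (h : IsSkewPolyRing S D ι t) (r : R) : ℕ :=
  (coeffs h r).support.sup id

/-- `r ∈ K[t;S,D]` is monic: its leading coefficient is `1`. -/
noncomputable def SMonic {K R : Type*} [DivisionRing K] [Ring R] {S : K →+* K} {D : K →+ K}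
    {ι : K →+* R} {t : R} (h : IsSkewPolyRing S D ι t) (r : R) : Prop :=
  coeffs h r (sdeg h r) = 1

namespace SkewAux

variable {K R : Type*} [DivisionRing K] [Ring R]

/-- Interpret a finsupp of coefficients as an element of `R`. -/
noncomputable def toR (ι : K →+* R) (t : R) (c : ℕ →₀ K) : R :=
  c.sum fun i k => ι k * t ^ i

variable {S : K →+* K} {D : K →+ K} {ι : K →+* R} {t : R}

theorem toR_zero : toR ι t 0 = 0 := Finsupp.sum_zero_index

theorem toR_add (c d : ℕ →₀ K) : toR ι t (c + d) = toR ι t c + toR ι t d :=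
  Finsupp.sum_add_index' (fun i => by simp) (fun i k₁ k₂ => by simp [add_mul])

theorem toR_sub (c d : ℕ →₀ K) : toR ι t (c - d) = toR ι t c - toR ι t d :=
  Finsupp.sum_sub_index (fun i k₁ k₂ => by simp [sub_mul])

theorem toR_single (i : ℕ) (k : K) : toR ι t (Finsupp.single i k) = ι k * t ^ i := by
  rw [toR, Finsupp.sum_single_index]; simp

theorem toR_mul_t (c : ℕ →₀ K) :
    toR ι t c * t = toR ι t (Finsupp.mapDomain (· + 1) c) := by
  rw [toR, toR, Finsupp.sum_mapDomain_index_inj (add_left_injective 1), Finsupp.sum_mul]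
  exact Finset.sum_congr rfl fun i _ => by simp [pow_succ, mul_assoc]

theorem ι_mul_toR (k : K) (c : ℕ →₀ K) :
    ι k * toR ι t c = toR ι t (Finsupp.mapRange (k * ·) (mul_zero k) c) := by
  rw [toR, toR, Finsupp.sum_mapRange_index (fun i => by simp), Finsupp.mul_sum]
  exact Finset.sum_congr rfl fun i _ => by simp [map_mul, mul_assoc]

variable (h : IsSkewPolyRing S D ι t)
include h

theorem toR_coeffs (r : R) : r = toR ι t (coeffs h r) := (h.2 r).choose_spec.1

theorem coeffs_eq {r : R} {c : ℕ →₀ K} (hc : r = toR ι t c) : coeffs h r = c :=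
  ((h.2 r).choose_spec.2 c hc).symm

theorem toR_inj {c d : ℕ →₀ K} (hcd : toR ι t c = toR ι t d) : c = d := by
  have h1 := coeffs_eq h (rfl : toR ι t c = toR ι t c)
  have h2 := coeffs_eq h hcd
  rw [← h1, h2]

omit h

/-- `r` is represented by coefficients supported in degrees `≤ n`. -/
def DegLE (ι : K →+* R) (t : R) (r : R) (n : ℕ) : Prop :=
  ∃ d : ℕ →₀ K, (∀ j ∈ d.support, j ≤ n) ∧ r = toR ι t d

theorem DegLE.mono {r : R} {n n' : ℕ} (hn : n ≤ n') (hr : DegLE ι t r n) :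
    DegLE ι t r n' := by
  obtain ⟨d, hd, rfl⟩ := hr
  exact ⟨d, fun j hj => le_trans (hd j hj) hn, rfl⟩

theorem DegLE.add {r r' : R} {n : ℕ} (hr : DegLE ι t r n) (hr' : DegLE ι t r' n) :
    DegLE ι t (r + r') n := by
  obtain ⟨d, hd, rfl⟩ := hr
  obtain ⟨d', hd', rfl⟩ := hr'
  refine ⟨d + d', fun j hj => ?_, (toR_add d d').symm⟩
  rcases Finset.mem_union.1 (Finsupp.support_add hj) with hj | hj
  exacts [hd j hj, hd' j hj]

theorem DegLE.neg {r : R} {n : ℕ} (hr : DegLE ι t r n) : DegLE ι t (-r) n := by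
  obtain ⟨d, hd, rfl⟩ := hr
  refine ⟨-d, fun j hj => hd j (by simpa using hj), ?_⟩
  have : toR ι t (0 - d) = toR ι t 0 - toR ι t d := toR_sub 0 d
  simpa [toR_zero] using this.symm

theorem DegLE.sub {r r' : R} {n : ℕ} (hr : DegLE ι t r n) (hr' : DegLE ι t r' n) :
    DegLE ι t (r - r') n := by
  rw [sub_eq_add_neg]; exact hr.add hr'.neg

theorem DegLE.zero (n : ℕ) : DegLE ι t (0 : R) n :=
  ⟨0, by simp, toR_zero.symm⟩

theorem DegLE.ι_mul_pow (k : K) {i n : ℕ} (hi : i ≤ n) : DegLE ι t (ι k * t ^ i) n :=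
  ⟨Finsupp.single i k, fun j hj => by
    have := Finsupp.support_single_subset hj
    simp only [Finset.mem_singleton] at this; omega,
    (toR_single i k).symm⟩

theorem DegLE.mul_t {r : R} {n : ℕ} (hr : DegLE ι t r n) : DegLE ι t (r * t) (n + 1) := by
  obtain ⟨d, hd, rfl⟩ := hr
  refine ⟨Finsupp.mapDomain (· + 1) d, fun j hj => ?_, by rw [toR_mul_t d]⟩
  obtain ⟨i, hi, rfl⟩ := Finset.mem_image.1 (Finsupp.mapDomain_support hj)
  exact Nat.add_le_add_right (hd i hi) 1

theorem DegLE.ι_mul {r : R} {n : ℕ} (k : K) (hr : DegLE ι t r n) : DegLE ι t (ι k * r) n := by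
  obtain ⟨d, hd, rfl⟩ := hr
  refine ⟨Finsupp.mapRange (k * ·) (mul_zero k) d, fun j hj => ?_, by rw [ι_mul_toR k d]⟩
  exact hd j (Finsupp.support_mapRange hj)

include h

theorem degLE_pow_mul_ι (m : ℕ) (a : K) : DegLE ι t (t ^ m * ι a) m := by
  induction m generalizing a with
  | zero => simpa using DegLE.ι_mul_pow (ι := ι) (t := t) a (le_refl 0)
  | succ m ih =>
      have e : t ^ (m + 1) * ι a = (t ^ m * ι (S a)) * t + t ^ m * ι (D a) := by
        rw [pow_succ, mul_assoc, h.1 a, mul_add, ← mul_assoc]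
      rw [e]
      exact ((ih (S a)).mul_t).add ((ih (D a)).mono (by omega))

theorem DegLE.mul_ι {r : R} {n : ℕ} (hr : DegLE ι t r n) (a : K) :
    DegLE ι t (r * ι a) n := by
  obtain ⟨d, hd, rfl⟩ := hr
  rw [toR, Finsupp.sum, Finset.sum_mul]
  refine Finset.sum_induction _ (fun z => DegLE ι t z n) (fun _ _ => DegLE.add) (DegLE.zero n)
    fun i hi => ?_
  rw [mul_assoc]
  exact DegLE.ι_mul _ ((degLE_pow_mul_ι h i a).mono (hd i hi))

theorem const_of_mul_linear (x : K) (u : R) (hu : DegLE ι t (u * (t - ι x)) 1) :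
    ∃ k : K, u = ι k := by
  by_cases hu0 : u = 0
  · exact ⟨0, by simp [hu0]⟩
  set c := coeffs h u with hc
  have hrep : u = toR ι t c := toR_coeffs h u
  have hcne : c ≠ 0 := fun h0 => hu0 (by rw [hrep, h0, toR_zero])
  set m := c.support.sup id with hm
  have hsupne : c.support.Nonempty := Finsupp.support_nonempty_iff.2 hcne
  obtain ⟨j0, hj0, hj0eq⟩ := Finset.exists_mem_eq_sup c.support hsupne id
  have hcm : c m ≠ 0 := by rw [hm, hj0eq]; exact Finsupp.mem_support_iff.1 hj0
  obtain ⟨d, hd, hdeq⟩ :=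
    DegLE.mul_ι h ⟨c, fun j hj => Finset.le_sup (f := id) hj, hrep⟩ x
  obtain ⟨e, he, heeq⟩ := hu
  have key : Finsupp.mapDomain (· + 1) c - d = e := by
    apply toR_inj h
    rw [toR_sub, ← toR_mul_t, ← hrep, ← hdeq, ← heeq, mul_sub]
  have hm0 : m = 0 := by
    by_contra hm0
    have hd1 : d (m + 1) = 0 :=
      Finsupp.notMem_support_iff.1 fun hmem => by have := hd _ hmem; omega
    have h1 : (Finsupp.mapDomain (· + 1) c - d : ℕ →₀ K) (m + 1) = c m := by
      rw [Finsupp.sub_apply, hd1, sub_zero,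
        show m + 1 = (fun x => x + 1) m from rfl,
        Finsupp.mapDomain_apply (add_left_injective 1)]
    have h2 : e (m + 1) = 0 :=
      Finsupp.notMem_support_iff.1 fun hmem => by have := he _ hmem; omega
    rw [key, h2] at h1
    exact hcm h1.symm
  refine ⟨c 0, ?_⟩
  have hcs : c = Finsupp.single 0 (c 0) := by
    ext j
    rcases Nat.eq_zero_or_pos j with rfl | hj
    · simp
    · have hj' : c j = 0 := by
        by_contra hne
        have : j ≤ m := Finset.le_sup (f := id) (Finsupp.mem_support_iff.2 hne)
        omega
      rw [hj', Finsupp.single_eq_of_ne (by omega)]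
  conv_lhs => rw [hrep, hcs]
  rw [toR_single, pow_zero, mul_one]

theorem expand_linear (a b : K) :
    (t - ι a) * (t - ι b) = t * t - ι (S b + a) * t + ι (a * b - D b) := by
  have ht := h.1 b
  rw [sub_mul, mul_sub, mul_sub, ht, map_add, map_sub, map_mul]
  noncomm_ring

theorem div_quadratic (s p : K) (g : R) (hg : g = t * t - ι s * t + ι p) :
    ∀ n : ℕ, ∀ c : ℕ →₀ K, (∀ j ∈ c.support, j ≤ n) →
      ∃ q : R, ∃ b₁ b₀ : K, toR ι t c = q * g + (ι b₁ * t + ι b₀) := by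
  intro n
  induction n using Nat.strong_induction_on with
  | _ n ih =>
    intro c hc
    rcases le_or_gt n 1 with h1 | h1
    · refine ⟨0, c 1, c 0, ?_⟩
      have hcs : c = Finsupp.single 1 (c 1) + Finsupp.single 0 (c 0) := by
        ext j
        match j with
        | 0 => simp
        | 1 => simp
        | (j + 2) =>
          have hj' : c (j + 2) = 0 := by
            by_contra hne
            have := hc _ (Finsupp.mem_support_iff.2 hne); omega
          simp [hj', Finsupp.single_apply]
      conv_lhs => rw [hcs]
      rw [toR_add, toR_single, toR_single, pow_one, pow_zero, mul_one, zero_mul, zero_add]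
    · obtain ⟨m, rfl⟩ : ∃ m, n = m + 2 := ⟨n - 2, by omega⟩
      set k := c (m + 2) with hk
      have expand : ι k * t ^ m * g
          = ι k * t ^ (m + 2) - ι k * ((t ^ m * ι s) * t) + ι k * (t ^ m * ι p) := by
        rw [hg, mul_add, mul_sub]
        rw [mul_assoc (ι k) (t ^ m), ← mul_assoc (t ^ m) t t, ← pow_succ, ← pow_succ]
        rw [mul_assoc (ι k) (t ^ m) (ι s * t), ← mul_assoc (t ^ m) (ι s) t,
          mul_assoc (ι k) (t ^ m) (ι p)]
      have hA : DegLE ι t (toR ι t c - ι k * t ^ (m + 2)) (m + 1) := by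
        refine ⟨c - Finsupp.single (m + 2) k, fun j hj => ?_, by rw [toR_sub, toR_single]⟩
        have hjne : (c - Finsupp.single (m + 2) k) j ≠ 0 := Finsupp.mem_support_iff.1 hj
        have hj2 : j ≠ m + 2 := by
          rintro rfl; apply hjne; simp [Finsupp.sub_apply, hk]
        have : c j ≠ 0 := by
          intro h0; apply hjne
          rw [Finsupp.sub_apply, h0, Finsupp.single_eq_of_ne hj2, sub_zero]
        have := hc _ (Finsupp.mem_support_iff.2 this); omega
      have hB : DegLE ι t (ι k * ((t ^ m * ι s) * t)) (m + 1) :=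
        DegLE.ι_mul _ ((degLE_pow_mul_ι h m s).mul_t)
      have hC : DegLE ι t (ι k * (t ^ m * ι p)) (m + 1) :=
        DegLE.ι_mul _ ((degLE_pow_mul_ι h m p).mono (by omega))
      have hrest : DegLE ι t (toR ι t c - ι k * t ^ m * g) (m + 1) := by
        have e : toR ι t c - ι k * t ^ m * g
            = (toR ι t c - ι k * t ^ (m + 2)) + ι k * ((t ^ m * ι s) * t)
              - ι k * (t ^ m * ι p) := by
          rw [expand]; abel
        rw [e]
        exact (hA.add hB).sub hC
      obtain ⟨d, hd, hdeq⟩ := hrest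
      obtain ⟨q, b₁, b₀, hq⟩ := ih (m + 1) (by omega) d hd
      refine ⟨ι k * t ^ m + q, b₁, b₀, ?_⟩
      have : toR ι t c = ι k * t ^ m * g + toR ι t d := by rw [← hdeq]; abel
      rw [this, hq, add_mul]; abel

end SkewAux

open SkewAux

/-- For `x₁ ≠ x₂`, `(t − x₁^{x₁−x₂})(t − x₂) = (t − x₂^{x₂−x₁})(t − x₁)` in `K[t;S,D]`,
and this polynomial is the (monic) least left common multiple of `t − x₁` and `t − x₂`. -/
theorem llcm_two_linear {K R : Type*} [DivisionRing K] [Ring R] (S : K →+* K) (D : K →+ K)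
    (hD : ∀ a b : K, D (a * b) = S a * D b + D a * b)
    (ι : K →+* R) (t : R) (h : IsSkewPolyRing S D ι t)
    (x₁ x₂ : K) (hx : x₁ ≠ x₂) :
    (t - ι (sdConj S D x₁ (x₁ - x₂))) * (t - ι x₂) =
        (t - ι (sdConj S D x₂ (x₂ - x₁))) * (t - ι x₁) ∧
    SMonic h ((t - ι (sdConj S D x₁ (x₁ - x₂))) * (t - ι x₂)) ∧
    Ideal.span {(t - ι (sdConj S D x₁ (x₁ - x₂))) * (t - ι x₂)} =
      Ideal.span {t - ι x₁} ⊓ Ideal.span {t - ι x₂} := by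
  classical
  set c : K := x₁ - x₂ with hcdef
  have hc : c ≠ 0 := sub_ne_zero.2 hx
  set a₁ : K := sdConj S D x₁ (x₁ - x₂) with ha₁
  set a₂ : K := sdConj S D x₂ (x₂ - x₁) with ha₂
  have ha₁' : a₁ = S c * x₁ * c⁻¹ + D c * c⁻¹ := rfl
  have ha₂' : a₂ = S c * x₂ * c⁻¹ + D c * c⁻¹ := by
    have hneg : x₂ - x₁ = -c := by rw [hcdef]; abel
    rw [ha₂, sdConj, hneg, inv_neg, map_neg, map_neg]
    noncomm_ring
  have hSc : S x₁ - S x₂ = S c := by rw [← map_sub]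
  have hsub : a₁ - a₂ = S c := by
    rw [ha₁', ha₂', add_sub_add_right_eq_sub, ← sub_mul, ← mul_sub, ← hcdef,
      mul_assoc, mul_inv_cancel₀ hc, mul_one]
  have key1 : S x₂ + a₁ = S x₁ + a₂ := by
    have := sub_eq_sub_iff_add_eq_add.1 (hsub.trans hSc.symm)
    rw [add_comm a₁ (S x₂)] at this
    rw [this, add_comm]
  have hx1 : x₁ = c + x₂ := by rw [hcdef]; abel
  have swap : x₁ * c⁻¹ * x₂ = x₂ * c⁻¹ * x₁ := by
    conv_lhs => rw [hx1]
    conv_rhs => rw [hx1]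
    rw [add_mul, add_mul, mul_inv_cancel₀ hc, one_mul, mul_add,
      mul_assoc x₂ c⁻¹ c, inv_mul_cancel₀ hc, mul_one]
  have key2 : a₁ * x₂ - D x₂ = a₂ * x₁ - D x₁ := by
    have e : a₁ * x₂ - a₂ * x₁
        = S c * (x₁ * c⁻¹ * x₂) - S c * (x₂ * c⁻¹ * x₁)
          + D c * c⁻¹ * (x₂ - x₁) := by
      rw [ha₁', ha₂']; noncomm_ring
    have hDc : D c * c⁻¹ * (x₂ - x₁) = D x₂ - D x₁ := by
      rw [show x₂ - x₁ = -c by rw [hcdef]; abel, mul_neg, mul_assoc,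
        inv_mul_cancel₀ hc, mul_one, ← map_neg, show -c = x₂ - x₁ by rw [hcdef]; abel,
        map_sub]
    have e2 : a₁ * x₂ - a₂ * x₁ = D x₂ - D x₁ := by
      rw [e, swap, sub_self, zero_add, hDc]
    have := sub_eq_sub_iff_add_eq_add.1 e2
    exact sub_eq_sub_iff_add_eq_add.2 (by rw [add_comm (a₁ * x₂) (D x₁)] at this ⊢; rw [this, add_comm])
  -- Part 1
  have part1 : (t - ι a₁) * (t - ι x₂) = (t - ι a₂) * (t - ι x₁) := by
    rw [expand_linear h a₁ x₂, expand_linear h a₂ x₁, key1, key2]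
  set g : R := (t - ι a₁) * (t - ι x₂) with hgdef
  set s₀ : K := S x₂ + a₁ with hs₀
  set p₀ : K := a₁ * x₂ - D x₂ with hp₀
  have hgform : g = t * t - ι s₀ * t + ι p₀ := expand_linear h a₁ x₂
  -- Part 2
  set c₀ : ℕ →₀ K := Finsupp.single 2 1 + (Finsupp.single 1 (-s₀) + Finsupp.single 0 p₀)
    with hc₀
  have hgrep : g = toR ι t c₀ := by
    rw [hc₀, toR_add, toR_add, toR_single, toR_single, toR_single, map_one, map_neg,
      one_mul, pow_one, pow_zero, mul_one, hgform]
    noncomm_ring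
  have hco : coeffs h g = c₀ := coeffs_eq h hgrep
  have hc₀2 : c₀ 2 = 1 := by simp [hc₀]
  have hc₀le : ∀ j ∈ c₀.support, j ≤ 2 := by
    intro j hj
    by_contra hj2
    have : c₀ j = 0 := by
      rw [hc₀]
      simp only [Finsupp.add_apply, Finsupp.single_apply]
      rw [if_neg (by omega), if_neg (by omega), if_neg (by omega)]
      simp
    exact Finsupp.mem_support_iff.1 hj this
  have hdeg : sdeg h g = 2 := by
    rw [sdeg, hco]
    refine le_antisymm (Finset.sup_le fun j hj => hc₀le j hj) ?_
    exact Finset.le_sup (f := id) (Finsupp.mem_support_iff.2 (by rw [hc₀2]; exact one_ne_zero))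
  have part2 : SMonic h g := by rw [SMonic, hdeg, hco, hc₀2]
  -- Part 3
  refine ⟨part1, part2, ?_⟩
  have hgmem1 : g ∈ Ideal.span {t - ι x₁} :=
    Submodule.mem_span_singleton.2 ⟨t - ι a₂, by rw [smul_eq_mul, ← part1]⟩
  have hgmem2 : g ∈ Ideal.span {t - ι x₂} :=
    Submodule.mem_span_singleton.2 ⟨t - ι a₁, by rw [smul_eq_mul]⟩
  refine le_antisymm (Ideal.span_le.2 ?_) ?_
  · intro z hz
    rw [Set.mem_singleton_iff] at hz
    subst hz
    exact ⟨hgmem1, hgmem2⟩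
  · intro r hr
    obtain ⟨hr1, hr2⟩ := hr
    obtain ⟨q, b₁, b₀, hq⟩ := div_quadratic h s₀ p₀ g hgform ((coeffs h r).support.sup id)
      (coeffs h r) (fun j hj => Finset.le_sup (f := id) hj)
    rw [← toR_coeffs h r] at hq
    set rem : R := ι b₁ * t + ι b₀ with hrem
    have hremdeg : DegLE ι t rem 1 := by
      refine ⟨Finsupp.single 1 b₁ + Finsupp.single 0 b₀, ?_, ?_⟩
      · intro j hj
        rcases Finset.mem_union.1 (Finsupp.support_add hj) with hj | hj <;>
          have := Finsupp.support_single_subset hj <;>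
          simp only [Finset.mem_singleton] at this <;> omega
      · rw [toR_add, toR_single, toR_single, pow_one, pow_zero, mul_one]
    have hremrep : rem = toR ι t (Finsupp.single 1 b₁ + Finsupp.single 0 b₀) := by
      rw [toR_add, toR_single, toR_single, pow_one, pow_zero, mul_one]
    have hrem1 : rem ∈ Ideal.span {t - ι x₁} := by
      have : rem = r - q * g := by rw [hq]; abel
      rw [this]
      exact Submodule.sub_mem _ hr1 (Ideal.mul_mem_left _ q hgmem1)
    have hrem2 : rem ∈ Ideal.span {t - ι x₂} := by
      have : rem = r - q * g := by rw [hq]; abel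
      rw [this]
      exact Submodule.sub_mem _ hr2 (Ideal.mul_mem_left _ q hgmem2)
    obtain ⟨u, hu⟩ := Submodule.mem_span_singleton.1 hrem1
    obtain ⟨v, hv⟩ := Submodule.mem_span_singleton.1 hrem2
    rw [smul_eq_mul] at hu hv
    obtain ⟨k, rfl⟩ := const_of_mul_linear h x₁ u (hu ▸ hremdeg)
    obtain ⟨k', rfl⟩ := const_of_mul_linear h x₂ v (hv ▸ hremdeg)
    have hk : Finsupp.single 1 k + Finsupp.single 0 (-(k * x₁))
        = Finsupp.single 1 b₁ + Finsupp.single 0 b₀ := by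
      apply toR_inj h
      rw [← hremrep, ← hu, toR_add, toR_single, toR_single, pow_one, pow_zero,
        mul_one, map_neg, map_mul, mul_sub]
      noncomm_ring
    have hk' : Finsupp.single 1 k' + Finsupp.single 0 (-(k' * x₂))
        = Finsupp.single 1 b₁ + Finsupp.single 0 b₀ := by
      apply toR_inj h
      rw [← hremrep, ← hv, toR_add, toR_single, toR_single, pow_one, pow_zero,
        mul_one, map_neg, map_mul, mul_sub]
      noncomm_ring
    have hk1 : k = b₁ := by
      have := DFunLike.congr_fun hk 1; simpa using this
    have hk1' : k' = b₁ := by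
      have := DFunLike.congr_fun hk' 1; simpa using this
    have hk0 : -(k * x₁) = b₀ := by
      have := DFunLike.congr_fun hk 0; simpa using this
    have hk0' : -(k' * x₂) = b₀ := by
      have := DFunLike.congr_fun hk' 0; simpa using this
    have hb₁ : b₁ = 0 := by
      have hxx : b₁ * x₁ = b₁ * x₂ := by
        have e1 : -(b₁ * x₁) = b₀ := by rw [← hk1]; exact hk0
        have e2 : -(b₁ * x₂) = b₀ := by rw [← hk1']; exact hk0'
        exact neg_injective (e1.trans e2.symm)
      have : b₁ * c = 0 := by rw [hcdef, mul_sub, hxx, sub_self]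
      rcases mul_eq_zero.1 this with h0 | h0
      · exact h0
      · exact absurd h0 hc
    have hb₀ : b₀ = 0 := by rw [← hk0, hk1, hb₁, zero_mul, neg_zero]
    have hr0 : r = q * g := by rw [hq, hrem, hb₁, hb₀]; simp
    exact Submodule.mem_span_singleton.2 ⟨q, by rw [smul_eq_mul, ← hr0]⟩
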